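/- Let p be a prime, q = p^e, m, k ≥ 1, let {γ_1,…,γ_m} be a basis of 𝔽_{q^m} over 𝔽_q, and let f ∈ 𝔽_{q^m}[x_1,…,x_k] be a polynomial of degree at most d. Then there exists a polynomial F ∈ 𝔽_q[y_{1,1},…,y_{k,m}] in mk variables of total degree at most W_q(d, 𝔽_{q^m}^k) such that for all y_{i,j} ∈ 𝔽_q, Tr_{q^m/q}( f( ∑_{j=1}^m y_{1,j} γ_j, …, ∑_{j=1}^m y_{k,j} γ_j ) ) = F(y_{1,1},…,y_{k,m}), where W_q(d, 𝔽_{q^m}^k) = max{ S_q(t_1)+⋯+S_q(t_k) : (t_1,…,t_k) ∈ [0, q^m−1]^k, t_1+⋯+t_k ≤ d }. -/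

import Mathlib

open MvPolynomial

section Aux
set_option linter.unusedSectionVars false
variable {Fq Fqm : Type} [Field Fq] [Field Fqm] [Fintype Fq] [Fintype Fqm] [Algebra Fq Fqm]

lemma aux_trace {σ : Type} (G : MvPolynomial σ Fqm) :
    ∃ F : MvPolynomial σ Fq, F.totalDegree ≤ G.totalDegree ∧
      ∀ y : σ → Fq,
        Algebra.trace Fq Fqm (eval (fun s => algebraMap Fq Fqm (y s)) G) = eval y F := by
  refine ⟨∑ u ∈ G.support, monomial u (Algebra.trace Fq Fqm (G.coeff u)), ?_, ?_⟩
  · refine (totalDegree_finset_sum _ _).trans (Finset.sup_le fun u hu => ?_)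
    exact (totalDegree_monomial_le _ _).trans (le_totalDegree hu)
  · intro y
    conv_lhs => rw [G.as_sum]
    rw [map_sum, map_sum, map_sum]
    refine Finset.sum_congr rfl fun u hu => ?_
    rw [eval_monomial, eval_monomial]
    have h1 : (u.prod fun s n => (algebraMap Fq Fqm) (y s) ^ n)
        = algebraMap Fq Fqm (u.prod fun s n => y s ^ n) := by
      rw [Finsupp.prod, Finsupp.prod, map_prod]
      simp
    rw [h1, mul_comm, ← Algebra.smul_def, map_smul, smul_eq_mul, mul_comm]

lemma aux_pow (p e : ℕ) [Fact p.Prime] [CharP Fqm p]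
    (hq : Fintype.card Fq = p ^ e) {m : ℕ} (l : List ℕ) :
    ∀ δ : Fin m → Fqm, ∃ P : MvPolynomial (Fin m) Fqm,
      P.totalDegree ≤ l.sum ∧
      ∀ y : Fin m → Fq,
        eval (fun j => algebraMap Fq Fqm (y j)) P
          = (∑ j, y j • δ j) ^ Nat.ofDigits (p ^ e) l := by
  induction l with
  | nil =>
    intro δ
    exact ⟨1, by simp, fun y => by simp [Nat.ofDigits]⟩
  | cons a l ih =>
    intro δ
    obtain ⟨P', hd', he'⟩ := ih fun j => δ j ^ p ^ e
    refine ⟨(∑ j, C (δ j) * X j) ^ a * P', ?_, ?_⟩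
    · refine (totalDegree_mul _ _).trans ?_
      have h1 : (∑ j, C (δ j) * X j : MvPolynomial (Fin m) Fqm).totalDegree ≤ 1 := by
        refine (totalDegree_finset_sum _ _).trans (Finset.sup_le fun j _ => ?_)
        refine (totalDegree_mul _ _).trans ?_
        simp [totalDegree_X]
      have h2 := totalDegree_pow (∑ j, C (δ j) * X j) a
      simp only [List.sum_cons]
      have : ((∑ j, C (δ j) * X j : MvPolynomial (Fin m) Fqm) ^ a).totalDegree ≤ a := by
        refine h2.trans ?_
        calc a * (∑ j, C (δ j) * X j : MvPolynomial (Fin m) Fqm).totalDegree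
            ≤ a * 1 := Nat.mul_le_mul_left a h1
          _ = a := mul_one a
      omega
    · intro y
      have hiter : ∀ x : Fqm, x ^ p ^ e = iterateFrobenius Fqm p e x :=
        fun x => (iterateFrobenius_def p e x).symm
      have hfrob : (∑ j, y j • δ j) ^ p ^ e = ∑ j, y j • δ j ^ p ^ e := by
        rw [hiter, map_sum]
        refine Finset.sum_congr rfl fun j _ => ?_
        rw [← hiter, Algebra.smul_def, mul_pow, ← map_pow, ← hq, FiniteField.pow_card,
          ← Algebra.smul_def]
      rw [Nat.ofDigits_cons, pow_add, pow_mul, hfrob]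
      rw [map_mul, map_pow, he' y]
      congr 1
      rw [map_sum]
      simp [Algebra.smul_def, mul_comm]

end Aux

def redAux (n t : ℕ) : ℕ := if t = 0 then 0 else (t - 1) % n + 1

/-- Let `p` be a prime, `q = p^e`, `m, k ≥ 1`, let `γ_1,…,γ_m`
be a basis of `𝔽_{q^m}` over `𝔽_q`, and let `f ∈ 𝔽_{q^m}[x_1,…,x_k]` have degree
at most `d`.  Then there is a polynomial `F ∈ 𝔽_q[y_{1,1},…,y_{k,m}]` of total
degree at most `W_q(d, 𝔽_{q^m}^k)` with
`Tr_{q^m/q}( f(∑_j y_{1,j}γ_j, …, ∑_j y_{k,j}γ_j) ) = F(y)` for all `y` over `𝔽_q`,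
where `W_q(d, 𝔽_{q^m}^k) = max{ ∑_i S_q(t_i) : t ∈ [0,q^m−1]^k, ∑_i t_i ≤ d }`. -/
theorem stmt_13 (p e m k d : ℕ) [Fact p.Prime] (he : 1 ≤ e) (hm : 1 ≤ m) (hk : 1 ≤ k)
    (Fq Fqm : Type) [Field Fq] [Field Fqm] [Fintype Fq] [Fintype Fqm] [Algebra Fq Fqm]
    (hq : Fintype.card Fq = p ^ e) (hqm : Fintype.card Fqm = (p ^ e) ^ m)
    (γ : Module.Basis (Fin m) Fq Fqm)
    (W : ℕ)
    (hW : W = ((Fintype.piFinset fun _ : Fin k => Finset.range ((p ^ e) ^ m)).filter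
        (fun t => ∑ i, t i ≤ d)).sup (fun t => ∑ i, (Nat.digits (p ^ e) (t i)).sum))
    (f : MvPolynomial (Fin k) Fqm) (hf : f.totalDegree ≤ d) :
    ∃ F : MvPolynomial (Fin k × Fin m) Fq,
      F.totalDegree ≤ W ∧
      ∀ y : Fin k × Fin m → Fq,
        Algebra.trace Fq Fqm (MvPolynomial.eval (fun i => ∑ j, y (i, j) • γ j) f)
          = MvPolynomial.eval y F := by
  have hp : p.Prime := Fact.out
  have hWge : ∀ t ∈ (Fintype.piFinset fun _ : Fin k => Finset.range ((p ^ e) ^ m)).filter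
      (fun t => ∑ i, t i ≤ d), (∑ i, (Nat.digits (p ^ e) (t i)).sum) ≤ W := by
    rw [hW]
    exact fun t ht => Finset.le_sup (f := fun t => ∑ i, (Nat.digits (p ^ e) (t i)).sum) ht
  clear hW
  have hchar : CharP Fqm p := by
    haveI := ringChar.charP Fqm
    obtain ⟨n, hn1, hn2⟩ := FiniteField.card Fqm (ringChar Fqm)
    have hdvd : p ∣ ringChar Fqm ^ (n : ℕ) := by
      rw [← hn2, hqm, ← pow_mul]
      exact dvd_pow_self p (by positivity)
    have hpr := (Nat.prime_dvd_prime_iff_eq hp hn1).mp (hp.dvd_of_dvd_pow hdvd)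
    rw [hpr]
    exact ringChar.charP Fqm
  haveI := hchar
  have hq2 : 2 ≤ (p ^ e) ^ m := by
    have h2 := hp.two_le
    calc 2 ≤ p := h2
      _ ≤ p ^ e := Nat.le_self_pow (by omega) p
      _ ≤ ((p ^ e)) ^ m := Nat.le_self_pow (by omega) _
  have hred_le : ∀ t, redAux (((p ^ e) ^ m - 1)) t ≤ t := by
    intro t
    unfold redAux
    split
    · omega
    · have := Nat.mod_le (t - 1) (((p ^ e) ^ m - 1)); omega
  have hred_lt : ∀ t, redAux (((p ^ e) ^ m - 1)) t < (p ^ e) ^ m := by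
    intro t
    unfold redAux
    split
    · omega
    · have := Nat.mod_lt (t - 1) (show 0 < ((p ^ e) ^ m - 1) by omega); omega
  have hred_pow : ∀ (x : Fqm) (t : ℕ), x ^ t = x ^ redAux (((p ^ e) ^ m - 1)) t := by
    intro x t
    unfold redAux
    split
    · rename_i ht; rw [ht]
    · rename_i ht
      rcases eq_or_ne x 0 with hx | hx
      · rw [hx, zero_pow ht, zero_pow (by omega)]
      · have h1 : x ^ (((p ^ e) ^ m - 1)) = 1 := by
          have := FiniteField.pow_card_sub_one_eq_one x hx
          rwa [hqm] at this
        have ht2 : t = (t - 1) % (((p ^ e) ^ m - 1)) + (((p ^ e) ^ m - 1)) * ((t - 1) / (((p ^ e) ^ m - 1))) + 1 := by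
          rw [Nat.mod_add_div]; omega
        conv_lhs => rw [ht2]
        rw [pow_add, pow_add, pow_mul, h1, one_pow, mul_one, pow_one, pow_succ]
  have hPt : ∀ t : ℕ, ∃ P : MvPolynomial (Fin m) Fqm,
      P.totalDegree ≤ (Nat.digits (p ^ e) t).sum ∧
      ∀ y : Fin m → Fq,
        eval (fun j => algebraMap Fq Fqm (y j)) P = (∑ j, y j • γ j) ^ t := by
    intro t
    obtain ⟨P, h1, h2⟩ := aux_pow (Fq := Fq) p e hq (Nat.digits (p ^ e) t) γ
    exact ⟨P, h1, fun y => by rw [h2 y, Nat.ofDigits_digits]⟩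
  choose P hPdeg hPeval using hPt
  set G : MvPolynomial (Fin k × Fin m) Fqm :=
    ∑ u ∈ f.support, C (coeff u f) * ∏ i, rename (Prod.mk i) (P (redAux (((p ^ e) ^ m - 1)) (u i))) with hG
  obtain ⟨F, hF1, hF2⟩ := aux_trace (Fq := Fq) G
  refine ⟨F, ?_, ?_⟩
  · refine hF1.trans ?_
    refine (totalDegree_finset_sum _ _).trans (Finset.sup_le fun u hu => ?_)
    have hus : ∑ i, u i ≤ d := by
      have h3 := le_totalDegree (p := f) hu
      have h4 : (u.sum fun _ e => e) = ∑ i, u i :=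
        Finsupp.sum_fintype _ _ fun i => rfl
      omega
    have hmem : (fun i => redAux (((p ^ e) ^ m - 1)) (u i)) ∈ (Fintype.piFinset fun _ : Fin k =>
        Finset.range ((p ^ e) ^ m)).filter (fun t => ∑ i, t i ≤ d) := by
      rw [Finset.mem_filter]
      refine ⟨?_, ?_⟩
      · rw [Fintype.mem_piFinset]
        intro i
        rw [Finset.mem_range]
        exact hred_lt _
      · calc ∑ i, redAux (((p ^ e) ^ m - 1)) (u i) ≤ ∑ i, u i := Finset.sum_le_sum fun i _ => hred_le _
          _ ≤ d := hus
    refine le_trans ?_ (hWge _ hmem)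
    refine (totalDegree_mul _ _).trans ?_
    rw [totalDegree_C, zero_add]
    refine (totalDegree_finset_prod _ _).trans (Finset.sum_le_sum fun i _ => ?_)
    exact (totalDegree_rename_le _ _).trans (hPdeg _)
  · intro y
    rw [← hF2 y]
    congr 1
    rw [eval_eq' (fun i => ∑ j, y (i, j) • γ j) f, hG, map_sum]
    refine Finset.sum_congr rfl fun u hu => ?_
    rw [map_mul, eval_C, map_prod]
    congr 1
    refine Finset.prod_congr rfl fun i _ => ?_
    rw [eval_rename]
    have := hPeval (redAux (((p ^ e) ^ m - 1)) (u i)) (fun j => y (i, j))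
    rw [show ((fun s => algebraMap Fq Fqm (y s)) ∘ Prod.mk i)
        = fun j => algebraMap Fq Fqm (y (i, j)) from rfl, this]
    exact hred_pow _ _
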